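/- Let H ⊆ F be finitely primary of rank s ≥ 2 and exponent α. For every positive integer k, the element x = p_i^{αk}·(p₁⋯p_s)^α lies in H and every factorization of x into atoms of H has length at most α; consequently some atom y in any such factorization satisfies v_{p_i}(y) ≥ k+1. -/

import Mathlib

open scoped nonZeroDivisors

section MonoidDefs
variable {H B : Type*} [CommMonoid H] [CommMonoid B]

/-- The set of lengths of `a`: `{0}` for units, otherwise the set of `k` such that
`a` is a product of `k` atoms (irreducible elements). -/
def lengthsSet (a : H) : Set ℕ :=
  {k | (IsUnit a ∧ k = 0) ∨
    (¬ IsUnit a ∧ ∃ l : Multiset H, Multiset.card l = k ∧ (∀ x ∈ l, Irreducible x) ∧ l.prod = a)}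

/-- A transfer homomorphism: (T1) `B = θ(H)·B^×` and `θ⁻¹(B^×) = H^×`;
(T2) factorizations of `θ u` lift to factorizations of `u` up to associates. -/
def IsTransferHom (θ : H →* B) : Prop :=
  (∀ b : B, ∃ u : H, ∃ ε : Bˣ, b = θ u * ε) ∧
  (∀ u : H, IsUnit (θ u) → IsUnit u) ∧
  (∀ u : H, ∀ b c : B, θ u = b * c →
    ∃ v w : H, u = v * w ∧ Associated (θ v) b ∧ Associated (θ w) c)

/-- A Krull monoid: a monoid admitting a divisor homomorphism into a
free abelian monoid. -/
def IsKrullMonoid (H : Type*) [CommMonoid H] : Prop :=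
  ∃ (ι : Type) (d : H →* Multiplicative (ι →₀ ℕ)), ∀ a b : H, d a ∣ d b → a ∣ b

/-- Half-factorial: all factorizations of an element into atoms have the same length. -/
def IsHalfFactorial (A : Type*) [CommMonoid A] : Prop :=
  ∀ (a : A) (l m : Multiset A), (∀ x ∈ l, Irreducible x) → (∀ x ∈ m, Irreducible x) →
    l.prod = a → m.prod = a → Multiset.card l = Multiset.card m

/-- An absolutely irreducible element: an atom all of whose powers factor uniquely
into atoms, up to associates. -/
def AbsolutelyIrreducible (a : H) : Prop :=
  Irreducible a ∧ ∀ n : ℕ, 0 < n → ∀ l m : Multiset H,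
    (∀ x ∈ l, Irreducible x) → (∀ x ∈ m, Irreducible x) →
    l.prod = a ^ n → m.prod = a ^ n → Multiset.Rel Associated l m

end MonoidDefs

/-- A prime element of a monoid. -/
def IsPrimeElem {F : Type*} [CommMonoid F] (q : F) : Prop :=
  ¬ IsUnit q ∧ ∀ a b : F, q ∣ a * b → q ∣ a ∨ q ∣ b


section FPAux
variable {F : Type*} [CancelCommMonoid F]

lemma primeElem_dvd_pow {q a : F} (hq : IsPrimeElem q) {n : ℕ} (h : q ∣ a ^ n) : q ∣ a := by
  induction n with
  | zero => exact absurd (isUnit_of_dvd_one (by simpa using h)) hq.1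
  | succ n ih =>
    rw [pow_succ] at h
    rcases hq.2 _ _ h with h' | h'
    · exact ih h'
    · exact h'

lemma primeElem_dvd_prod {q : F} (hq : IsPrimeElem q) {ι : Type*} {t : Finset ι} {f : ι → F}
    (h : q ∣ ∏ j ∈ t, f j) : ∃ j ∈ t, q ∣ f j := by
  classical
  induction t using Finset.induction with
  | empty => exact absurd (isUnit_of_dvd_one (by simpa using h)) hq.1
  | insert _ _ hj ih =>
    rw [Finset.prod_insert hj] at h
    rcases hq.2 _ _ h with h' | h'
    · exact ⟨_, Finset.mem_insert_self _ _, h'⟩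
    · obtain ⟨j, hjm, hd⟩ := ih h'
      exact ⟨j, Finset.mem_insert_of_mem hjm, hd⟩

lemma primeElem_not_dvd_unit {q u : F} (hq : IsPrimeElem q) (hu : IsUnit u) : ¬ q ∣ u :=
  fun h => hq.1 (isUnit_of_dvd_unit h hu)

lemma primeElem_dvd_primeElem_assoc {q r : F} (hq : IsPrimeElem q) (hr : IsPrimeElem r)
    (h : q ∣ r) : Associated q r := by
  obtain ⟨c, hc⟩ := h
  rcases hr.2 q c (hc ▸ dvd_refl r) with h' | h'
  · obtain ⟨d, hd⟩ := h'
    have h1 : r * 1 = r * (d * c) := by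
      rw [mul_one]; conv_lhs => rw [hc, hd]
      exact mul_assoc r d c
    have hdc : d * c = 1 := (mul_left_cancel h1).symm
    have hcu : IsUnit c := IsUnit.of_mul_eq_one d (by rw [mul_comm]; exact hdc)
    obtain ⟨u, hu⟩ := hcu
    exact ⟨u, by rw [hu, ← hc]⟩
  · obtain ⟨e, he⟩ := h'
    have h1 : r * 1 = r * (e * q) := by
      rw [mul_one]; conv_lhs => rw [hc, he]
      exact (mul_comm q (r*e)).trans (mul_assoc r e q)
    have : e * q = 1 := (mul_left_cancel h1).symm
    exact absurd (IsUnit.of_mul_eq_one e (by rw [mul_comm]; exact this)) hq.1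

variable {s : ℕ} {p : Fin s → F}

lemma prime_dvd_unit_prod (hprime : ∀ i, IsPrimeElem (p i))
    (hnonassoc : ∀ i j, i ≠ j → ¬ Associated (p i) (p j))
    {δ : Fˣ} {b : Fin s → ℕ} {j : Fin s}
    (h : p j ∣ (δ : F) * ∏ m, p m ^ b m) : b j ≠ 0 := by
  rcases (hprime j).2 _ _ h with h' | h'
  · exact absurd h' (primeElem_not_dvd_unit (hprime j) δ.isUnit)
  · obtain ⟨m, -, hd⟩ := primeElem_dvd_prod (hprime j) h'
    rcases Nat.eq_zero_or_pos (b m) with hbm | hbm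
    · rw [hbm, pow_zero] at hd
      exact absurd (isUnit_of_dvd_one hd) (hprime j).1
    · have hjm : p j ∣ p m := primeElem_dvd_pow (hprime j) hd
      rcases eq_or_ne j m with rfl | hne
      · omega
      · exact absurd (primeElem_dvd_primeElem_assoc (hprime j) (hprime m) hjm)
          (hnonassoc j m hne)

lemma prod_pow_update (i : Fin s) {c : Fin s → ℕ} (hc : c i ≠ 0) :
    ∏ j, p j ^ c j = p i * ∏ j, p j ^ (Function.update c i (c i - 1)) j := by
  rw [← Finset.mul_prod_erase Finset.univ _ (Finset.mem_univ i),
      ← Finset.mul_prod_erase Finset.univ (fun j => p j ^ (Function.update c i (c i - 1)) j)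
        (Finset.mem_univ i), ← mul_assoc]
  have h1 : ∀ j ∈ Finset.univ.erase i,
      p j ^ (Function.update c i (c i - 1)) j = p j ^ c j := by
    intro j hj
    rw [Function.update_of_ne (Finset.ne_of_mem_erase hj)]
  rw [Finset.prod_congr rfl h1]
  congr 1
  rw [Function.update_self, ← pow_succ', Nat.sub_add_cancel (Nat.one_le_iff_ne_zero.mpr hc)]

lemma exponents_unique (hprime : ∀ i, IsPrimeElem (p i))
    (hnonassoc : ∀ i j, i ≠ j → ¬ Associated (p i) (p j)) :
    ∀ n (a b : Fin s → ℕ), (∑ i, a i) = n →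
    ∀ ε δ : Fˣ, (ε : F) * ∏ i, p i ^ a i = (δ : F) * ∏ i, p i ^ b i → a = b := by
  intro n
  induction n using Nat.strong_induction_on with
  | _ n ih =>
    intro a b hn ε δ heq
    by_cases hA : ∀ j, a j = 0
    · funext j
      rw [hA j]
      by_contra hbj
      have hd : p j ∣ (ε : F) * ∏ m, p m ^ a m := by
        rw [heq]
        exact Dvd.dvd.mul_left (dvd_pow_self (p j) (fun h => hbj h.symm) |>.trans
          (Finset.dvd_prod_of_mem (fun m => p m ^ b m) (Finset.mem_univ j))) _
      have : ∏ m, p m ^ a m = 1 := by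
        apply Finset.prod_eq_one; intro m _; rw [hA m, pow_zero]
      rw [this, mul_one] at hd
      exact primeElem_not_dvd_unit (hprime j) ε.isUnit hd
    · push_neg at hA
      obtain ⟨i, hai⟩ := hA
      have hbi : b i ≠ 0 := by
        apply prime_dvd_unit_prod hprime hnonassoc (δ := δ) (b := b) (j := i)
        rw [← heq]
        exact Dvd.dvd.mul_left (dvd_pow_self (p i) hai |>.trans
          (Finset.dvd_prod_of_mem (fun m => p m ^ a m) (Finset.mem_univ i))) _
      set a' := Function.update a i (a i - 1) with ha'
      set b' := Function.update b i (b i - 1) with hb'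
      have heq' : (ε : F) * ∏ j, p j ^ a' j = (δ : F) * ∏ j, p j ^ b' j := by
        apply mul_left_cancel (a := p i)
        calc p i * ((ε:F) * ∏ j, p j ^ a' j) = (ε:F) * (p i * ∏ j, p j ^ a' j) := by
              rw [mul_left_comm]
          _ = (ε:F) * ∏ j, p j ^ a j := by rw [← prod_pow_update i hai]
          _ = (δ:F) * ∏ j, p j ^ b j := heq
          _ = (δ:F) * (p i * ∏ j, p j ^ b' j) := by rw [prod_pow_update i hbi]
          _ = p i * ((δ:F) * ∏ j, p j ^ b' j) := by rw [mul_left_comm]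
      have hsum : ∑ j, a' j = n - 1 := by
        rw [ha', Finset.sum_update_of_mem (Finset.mem_univ i)]
        rw [← Finset.add_sum_erase Finset.univ a (Finset.mem_univ i),
          Finset.erase_eq] at hn
        omega
      have hlt : n - 1 < n := by
        have : 0 < n := by
          rw [← hn]
          exact lt_of_lt_of_le (Nat.pos_of_ne_zero hai)
            (Finset.single_le_sum (fun j _ => Nat.zero_le _) (Finset.mem_univ i))
        omega
      have hab' : a' = b' := ih (n-1) hlt a' b' hsum ε δ heq'
      funext j
      rcases eq_or_ne j i with rfl | hne
      · have h1 : a j - 1 = b j - 1 := by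
          have := congrFun hab' j
          rwa [ha', hb', Function.update_self, Function.update_self] at this
        omega
      · have := congrFun hab' j
        rwa [ha', hb', Function.update_of_ne hne, Function.update_of_ne hne] at this

lemma multiset_prod_rep {v : F → Fin s → ℕ}
    (hrep : ∀ x : F, ∃ ε : Fˣ, x = (ε : F) * ∏ i, p i ^ v x i) (l : Multiset F) :
    ∃ ε : Fˣ, l.prod = (ε : F) * ∏ j, p j ^ (l.map (fun y => v y j)).sum := by
  induction l using Multiset.induction with
  | empty => exact ⟨1, by simp⟩
  | cons y t ih =>
    obtain ⟨ε, hε⟩ := ih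
    obtain ⟨δ, hδ⟩ := hrep y
    refine ⟨δ * ε, ?_⟩
    rw [Multiset.prod_cons, hε]
    conv_lhs => rw [hδ]
    simp only [Multiset.map_cons, Multiset.sum_cons, pow_add, Finset.prod_mul_distrib,
      Units.val_mul]
    exact mul_mul_mul_comm _ _ _ _

end FPAux

theorem finitely_primary_special_element {F : Type*} [CancelCommMonoid F]
    {s : ℕ} (hs : 2 ≤ s)
    (p : Fin s → F) (hprime : ∀ i, IsPrimeElem (p i))
    (hnonassoc : ∀ i j, i ≠ j → ¬ Associated (p i) (p j))
    (v : F → Fin s → ℕ)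
    (hrep : ∀ x : F, ∃ ε : Fˣ, x = (ε : F) * ∏ i, p i ^ v x i)
    (H : Submonoid F) {α : ℕ} (hα : 0 < α)
    (hH1 : ∀ x : ↥H, ¬ IsUnit x → (∏ i, p i) ∣ (x : F))
    (hH2 : ∀ y : F, (∏ i, p i) ^ α * y ∈ H)
    (k : ℕ) (hk : 0 < k) (i : Fin s) :
    p i ^ (α * k) * (∏ j, p j) ^ α ∈ H ∧
    ∀ l : Multiset ↥H, (∀ y ∈ l, Irreducible y) →
      (l.prod : F) = p i ^ (α * k) * (∏ j, p j) ^ α →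
      Multiset.card l ≤ α ∧ ∃ y ∈ l, k + 1 ≤ v (y : F) i := by
  classical
  have hmem : p i ^ (α * k) * (∏ j, p j) ^ α ∈ H := by
    have := hH2 (p i ^ (α * k))
    rwa [mul_comm] at this
  refine ⟨hmem, ?_⟩
  intro l hl hlprod
  set c : Fin s → ℕ := fun j => (if j = i then α * k else 0) + α with hc
  have hxc : p i ^ (α * k) * (∏ j, p j) ^ α = ∏ j, p j ^ c j := by
    rw [hc]
    simp only [pow_add, Finset.prod_mul_distrib]
    congr 1
    · rw [Finset.prod_eq_single i]
      · rw [if_pos rfl]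
      · intro j _ hj; rw [if_neg hj, pow_zero]
      · intro h; exact absurd (Finset.mem_univ i) h
    · rw [Finset.prod_pow]
  -- every atom has valuation ≥ 1 at every prime
  have hatom : ∀ y ∈ l, ∀ j, 1 ≤ v (y : F) j := by
    intro y hy j
    obtain ⟨z, hz⟩ := hH1 y (hl y hy).not_isUnit
    obtain ⟨δ, hδ⟩ := hrep z
    obtain ⟨ε, hε⟩ := hrep (y : F)
    have h2 : (ε : F) * ∏ m, p m ^ v (y : F) m = (δ : F) * ∏ m, p m ^ (v z m + 1) := by
      rw [← hε, hz]
      conv_lhs => rw [hδ]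
      simp only [pow_add, pow_one, Finset.prod_mul_distrib]
      rw [mul_comm, mul_assoc]
    have h3 := exponents_unique hprime hnonassoc (∑ m, v (y : F) m)
      (fun m => v (y : F) m) (fun m => v z m + 1) rfl ε δ h2
    have := congrFun h3 j
    omega
  -- compute the valuations of the product
  obtain ⟨ε, hε⟩ := multiset_prod_rep (p := p) hrep (l.map (fun y : ↥H => (y : F)))
  simp only [Multiset.map_map, Function.comp] at hε
  have hco : ((l.map (fun y : ↥H => (y : F))).prod) = (l.prod : F) := by
    induction l using Multiset.induction with
    | empty => simp
    | cons y t ih => simp [ih]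
  have hkey : (fun j => (l.map (fun y : ↥H => v (y : F) j)).sum) = c := by
    apply exponents_unique hprime hnonassoc
      (∑ m, (l.map (fun y : ↥H => v (y : F) m)).sum) _ _ rfl ε 1
    rw [Units.val_one, one_mul, ← hxc, ← hlprod, ← hco, hε]
  -- choose an index different from i
  have hs0 : 0 < s := by omega
  have hs1 : 1 < s := by omega
  set j0 : Fin s := if (i : ℕ) = 0 then ⟨1, hs1⟩ else ⟨0, hs0⟩ with hj0
  have hj0ne : j0 ≠ i := by
    intro h
    apply_fun (Fin.val) at h
    rw [hj0] at h
    by_cases hi : (i : ℕ) = 0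
    · rw [if_pos hi] at h; simp at h; omega
    · rw [if_neg hi] at h; simp at h; omega
  have hcard : Multiset.card l ≤ α := by
    have h1 : (l.map (fun y : ↥H => v (y : F) j0)).sum = α := by
      have h := congrFun hkey j0
      rw [hc] at h
      simpa [hj0ne] using h
    have h2 : Multiset.card l ≤ (l.map (fun y : ↥H => v (y : F) j0)).sum := by
      calc Multiset.card l = (l.map (fun _ : ↥H => 1)).sum := by simp
        _ ≤ _ := Multiset.sum_map_le_sum_map _ _ (fun y hy => hatom y hy j0)
    omega
  refine ⟨hcard, ?_⟩
  by_contra hcon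
  push_neg at hcon
  have hsi : (l.map (fun y : ↥H => v (y : F) i)).sum = α * k + α := by
    have h := congrFun hkey i
    rw [hc] at h
    simpa using h
  have hle : (l.map (fun y : ↥H => v (y : F) i)).sum ≤ Multiset.card l * k := by
    calc (l.map (fun y : ↥H => v (y : F) i)).sum
        ≤ (l.map (fun _ : ↥H => k)).sum :=
          Multiset.sum_map_le_sum_map _ _ (fun y hy => by have := hcon y hy; omega)
      _ = Multiset.card l * k := by simp [mul_comm]
  have hmul : Multiset.card l * k ≤ α * k := Nat.mul_le_mul_right k hcard
  omega
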